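/- Let φ ∈ GL(ℝ^{2n}) preserve Ω (i.e. Ω(φ·,φ·) = Ω) with J₁ = φ J₀ φ^{-1} compatible, and suppose Id − φ is invertible. Then the endomorphism S = (Π_0^1 − φ^{-1} conj(Π_1^0))(Id − φ) of ℂ^{2n} is symmetric with respect to the bilinear extension of ⟨·,·⟩, and its real part is positive definite; moreover for all Z ∈ ℝ^{2n}: ⟨Π_0^1(φZ − Z), φZ − Z⟩ + i Ω(φZ, Z) = ⟨S Z, Z⟩, i.e. exp(−π[⟨Π_0^1(φZ−Z),(φZ−Z)⟩ + iΩ(φZ,Z)]) = exp(−π⟨(Π_0^1 − φ^{-1}conj(Π_1^0))(Id−φ)Z, Z⟩). -/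

import Mathlib

open Matrix MeasureTheory

noncomputable section

/-- Standard complex structure on ℝ^{2n}: J₀ e_{2k} = e_{2k+1}, J₀ e_{2k+1} = -e_{2k}. -/
def J0 (n : ℕ) : Matrix (Fin (2*n)) (Fin (2*n)) ℝ :=
  Matrix.of fun i j =>
    if (i : ℕ) = (j : ℕ) + 1 ∧ (j : ℕ) % 2 = 0 then 1
    else if (j : ℕ) = (i : ℕ) + 1 ∧ (i : ℕ) % 2 = 0 then -1 else 0

/-- Standard symplectic form Ω(u,v) = ⟨J₀ u, v⟩. -/
def Omega (n : ℕ) (u v : Fin (2*n) → ℝ) : ℝ := (J0 n *ᵥ u) ⬝ᵥ v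

/-- A complex structure J compatible with Ω: J² = -Id, Ω is J-invariant,
and ⟨·,·⟩_J := Ω(·, J·) is positive definite. -/
def Compatible (n : ℕ) (J : Matrix (Fin (2*n)) (Fin (2*n)) ℝ) : Prop :=
  J * J = -1 ∧ (∀ u v, Omega n (J *ᵥ u) (J *ᵥ v) = Omega n u v) ∧
    ∀ v : Fin (2*n) → ℝ, v ≠ 0 → 0 < Omega n v (J *ᵥ v)

/-- Complexification of a real matrix. -/
def mc {m : ℕ} (M : Matrix (Fin m) (Fin m) ℝ) : Matrix (Fin m) (Fin m) ℂ :=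
  M.map (fun x => (x : ℂ))

/-- Complexification of a real vector. -/
def vc {m : ℕ} (v : Fin m → ℝ) : Fin m → ℂ := fun i => (v i : ℂ)

/-- Projection P^{(1,0)} = ½(Id - iK) onto the +i eigenspace of K. -/
def P10 {n : ℕ} (K : Matrix (Fin (2*n)) (Fin (2*n)) ℝ) : Matrix (Fin (2*n)) (Fin (2*n)) ℂ :=
  (1/2 : ℂ) • (1 - Complex.I • mc K)

/-- Projection P^{(0,1)} = ½(Id + iK) onto the -i eigenspace of K. -/
def P01 {n : ℕ} (K : Matrix (Fin (2*n)) (Fin (2*n)) ℝ) : Matrix (Fin (2*n)) (Fin (2*n)) ℂ :=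
  (1/2 : ℂ) • (1 + Complex.I • mc K)

/-- `Amat n K J = (½(Id + (-K)·J))⁻¹`; so `Amat n (J0 n) J` is A_t^0 and
`Amat n J (J0 n)` is A_0^t. -/
def Amat (n : ℕ) (K J : Matrix (Fin (2*n)) (Fin (2*n)) ℝ) : Matrix (Fin (2*n)) (Fin (2*n)) ℝ :=
  ((1/2 : ℝ) • (1 + (-K) * J))⁻¹

/-- Π_t^0 = A_t^0 · P₀^{(1,0)}, the projection onto V_t^{(1,0)} with kernel V₀^{(0,1)}. -/
def PiT0 (n : ℕ) (J : Matrix (Fin (2*n)) (Fin (2*n)) ℝ) : Matrix (Fin (2*n)) (Fin (2*n)) ℂ :=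
  mc (Amat n (J0 n) J) * P10 (J0 n)

/-- Π_0^t = A_0^t · P_t^{(1,0)}, the projection onto V₀^{(1,0)} with kernel V_t^{(0,1)}. -/
def Pi0T (n : ℕ) (J : Matrix (Fin (2*n)) (Fin (2*n)) ℝ) : Matrix (Fin (2*n)) (Fin (2*n)) ℂ :=
  mc (Amat n J (J0 n)) * P10 J

/-- Model Bergman kernel 𝒫_J(Z,Z') = exp(-(π/2)⟨(-J₀J)(Z-Z'),Z-Z'⟩ - πiΩ(Z,Z')). -/
def Pker (n : ℕ) (J : Matrix (Fin (2*n)) (Fin (2*n)) ℝ) (Z Z' : Fin (2*n) → ℝ) : ℂ :=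
  Complex.exp (-(Real.pi : ℂ)/2 * Complex.ofReal ((((-(J0 n)) * J) *ᵥ (Z - Z')) ⬝ᵥ (Z - Z'))
    - (Real.pi : ℂ) * Complex.I * Complex.ofReal (Omega n Z Z'))

/-- Closed formula for the composed kernel (𝒫_t𝒫_0)(Z,Z'). -/
def PtP0form (n : ℕ) (J : Matrix (Fin (2*n)) (Fin (2*n)) ℝ) (Z Z' : Fin (2*n) → ℝ) : ℂ :=
  Complex.ofReal (Real.sqrt (Amat n (J0 n) J).det) *
    Complex.exp (-(Real.pi : ℂ) *
      ((Pi0T n J *ᵥ (vc Z - vc Z')) ⬝ᵥ (vc Z - vc Z')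
        + Complex.I * Complex.ofReal (Omega n Z Z')))

/-- S = (Π_0^1 - φ⁻¹·conj(Π_1^0))(Id - φ), with J₁ = φJ₀φ⁻¹. -/
def Smat (n : ℕ) (φ : Matrix (Fin (2*n)) (Fin (2*n)) ℝ) : Matrix (Fin (2*n)) (Fin (2*n)) ℂ :=
  (Pi0T n (φ * J0 n * φ⁻¹)
      - mc φ⁻¹ * (PiT0 n (φ * J0 n * φ⁻¹)).map (⇑(starRingEnd ℂ))) * (1 - mc φ)

lemma J0_transpose (n : ℕ) : (J0 n)ᵀ = -(J0 n) := by
  ext i j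
  simp only [Matrix.transpose_apply, Matrix.neg_apply, J0, Matrix.of_apply]
  split_ifs <;> first | omega | norm_num

lemma J0_mul_J0 (n : ℕ) : J0 n * J0 n = -1 := by
  ext i j
  rw [Matrix.mul_apply]
  have hrhs : (-1 : Matrix (Fin (2*n)) (Fin (2*n)) ℝ) i j = if i = j then -1 else 0 := by
    simp [Matrix.one_apply]; split_ifs <;> simp
  rw [hrhs]
  by_cases hpar : (i : ℕ) % 2 = 0
  · have hlt : (i:ℕ) + 1 < 2*n := by omega
    rw [Finset.sum_eq_single (⟨(i:ℕ)+1, hlt⟩ : Fin (2*n))]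
    · simp only [J0, Matrix.of_apply, Fin.ext_iff, true_and, and_true]
      split_ifs <;> first | omega | norm_num
    · intro b _ hb
      have hb' : (b:ℕ) ≠ (i:ℕ)+1 := fun h => hb (Fin.ext h)
      simp only [J0, Matrix.of_apply]
      split_ifs <;> first | (exfalso; omega) | ring
    · intro h; exact absurd (Finset.mem_univ _) h
  · have hlt : (i:ℕ) - 1 < 2*n := by omega
    rw [Finset.sum_eq_single (⟨(i:ℕ)-1, hlt⟩ : Fin (2*n))]
    · simp only [J0, Matrix.of_apply, Fin.ext_iff, true_and, and_true]
      split_ifs <;> first | omega | norm_num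
    · intro b _ hb
      have hb' : (b:ℕ) ≠ (i:ℕ)-1 := fun h => hb (Fin.ext h)
      simp only [J0, Matrix.of_apply]
      split_ifs <;> first | (exfalso; omega) | ring
    · intro h; exact absurd (Finset.mem_univ _) h

-- mc / vc lemmas
lemma mc_one {m : ℕ} : mc (1 : Matrix (Fin m) (Fin m) ℝ) = 1 := by
  ext i j; simp [mc, Matrix.one_apply]; split_ifs <;> simp

lemma mc_add {m : ℕ} (M N : Matrix (Fin m) (Fin m) ℝ) : mc (M + N) = mc M + mc N := by
  ext i j; simp [mc]

lemma mc_sub {m : ℕ} (M N : Matrix (Fin m) (Fin m) ℝ) : mc (M - N) = mc M - mc N := by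
  ext i j; simp [mc]

lemma mc_neg {m : ℕ} (M : Matrix (Fin m) (Fin m) ℝ) : mc (-M) = -(mc M) := by
  ext i j; simp [mc]

lemma mc_mul {m : ℕ} (M N : Matrix (Fin m) (Fin m) ℝ) : mc (M * N) = mc M * mc N := by
  ext i j; simp [mc, Matrix.mul_apply]

lemma mc_smul {m : ℕ} (r : ℝ) (M : Matrix (Fin m) (Fin m) ℝ) :
    mc (r • M) = (r : ℂ) • mc M := by
  ext i j; simp [mc]

lemma mc_transpose {m : ℕ} (M : Matrix (Fin m) (Fin m) ℝ) : (mc M)ᵀ = mc Mᵀ := by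
  ext i j; simp [mc]

lemma mc_mulVec {m : ℕ} (M : Matrix (Fin m) (Fin m) ℝ) (x : Fin m → ℝ) :
    mc M *ᵥ vc x = vc (M *ᵥ x) := by
  ext i; simp [mc, vc, Matrix.mulVec, dotProduct]

lemma vc_dot {m : ℕ} (x y : Fin m → ℝ) : vc x ⬝ᵥ vc y = ((x ⬝ᵥ y : ℝ) : ℂ) := by
  simp [vc, dotProduct]

lemma vc_sub {m : ℕ} (x y : Fin m → ℝ) : vc (x - y) = vc x - vc y := by
  ext i; simp [vc]

lemma vc_ne_zero {m : ℕ} {x : Fin m → ℝ} (h : x ≠ 0) : vc x ≠ 0 := by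
  intro h0; apply h; ext i
  have := congrFun h0 i
  simpa [vc] using this

-- dot product lemmas
lemma mulVec_dot {m : ℕ} {R : Type*} [CommRing R] (M : Matrix (Fin m) (Fin m) R)
    (x y : Fin m → R) : (M *ᵥ x) ⬝ᵥ y = x ⬝ᵥ (Mᵀ *ᵥ y) := by
  rw [dotProduct_comm, Matrix.dotProduct_mulVec, ← Matrix.mulVec_transpose,
    dotProduct_comm]

lemma dot_ext {m : ℕ} {M N : Matrix (Fin m) (Fin m) ℝ}
    (h : ∀ x y, x ⬝ᵥ (M *ᵥ y) = x ⬝ᵥ (N *ᵥ y)) : M = N := by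
  ext i j
  have := h (Pi.single i 1) (Pi.single j 1)
  simpa [single_dotProduct, Matrix.mulVec_single] using this

lemma qform_transpose {m : ℕ} {R : Type*} [CommRing R] (M : Matrix (Fin m) (Fin m) R)
    (v : Fin m → R) : (Mᵀ *ᵥ v) ⬝ᵥ v = (M *ᵥ v) ⬝ᵥ v := by
  rw [mulVec_dot, Matrix.transpose_transpose, dotProduct_comm]

lemma isUnit_det_of_posq {m : ℕ} (M : Matrix (Fin m) (Fin m) ℝ)
    (h : ∀ v, v ≠ 0 → 0 < (M *ᵥ v) ⬝ᵥ v) : IsUnit M.det := by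
  rw [isUnit_iff_ne_zero]
  intro hdet
  obtain ⟨v, hv, hMv⟩ := Matrix.exists_mulVec_eq_zero_iff.2 hdet
  have := h v hv
  rw [hMv] at this
  simp at this

lemma dot_self_pos {m : ℕ} {v : Fin m → ℝ} (h : v ≠ 0) : 0 < v ⬝ᵥ v := by
  obtain ⟨i, hi⟩ := Function.ne_iff.1 h
  have hvi : v i ≠ 0 := by simpa using hi
  have hpos : (0:ℝ) < v i * v i := by
    rcases hvi.lt_or_gt with h' | h'
    · exact mul_pos_of_neg_of_neg h' h'
    · exact mul_pos h' h'
  exact Finset.sum_pos' (fun j _ => mul_self_nonneg _) ⟨i, Finset.mem_univ i, hpos⟩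


lemma ring_claims {R : Type*} [Ring R] (G J Φ Ψ A : R)
    (hGG : G*G = -1) (hJJ : J*J = -1) (hJΦ : J*Φ = Φ*G) (hΨJ : Ψ*J = G*Ψ)
    (hΦΨ : Φ*Ψ = 1) (hΨΦ : Ψ*Φ = 1)
    (hA1 : A*(1-J*G) = 1) (hA2 : (1-J*G)*A = 1) :
    ((1-G*J)*(1-A) = 1) ∧ ((1-A)*(1-G*J) = 1) ∧
    ((1 + G*Ψ*G)*A = A - Ψ*(1-A)) ∧
    ((1 + G*Ψ*G) * (A + (1-A)*(G*Φ*G)) = (A - Ψ*(1-A))*(1-Φ)) ∧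
    ((1 + G*Ψ*G) * (G*J*G*A + G*((1-A)*(G*Φ*G))) = (A*J + Ψ*((1-A)*G))*(1-Φ)) ∧
    ((G*Φ + (1+G*Ψ*G)*((A*J)*(Φ-1))) + (-(G*Ψ) + (1+G*Ψ*G)*((G*J*G*A)*(Φ-1)))
       = -((A*J + Ψ*((1-A)*G))*(1-Φ)) - ((A*J + Ψ*((1-A)*G))*(1-Φ))) := by
  have h2G : (1 - J*G)*G = G + J := by
    have h : (1 - J*G)*G = G - J*(G*G) := by noncomm_ring
    rw [h, hGG]; noncomm_ring
  have h2J : J*(1 - J*G) = J + G := by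
    have h : J*(1-J*G) = J - (J*J)*G := by noncomm_ring
    rw [h, hJJ]; noncomm_ring
  have hga : G*A = A*J := by
    calc G*A = A*(1-J*G)*(G*A) := by rw [hA1, one_mul]
    _ = A*(((1-J*G)*G)*A) := by noncomm_ring
    _ = A*((J*(1-J*G))*A) := by rw [h2G, add_comm G J, ← h2J]
    _ = (A*J)*((1-J*G)*A) := by noncomm_ring
    _ = A*J := by rw [hA2, mul_one]
  have hag : A*G = G - A*J := by
    calc A*G = A*(G+J) - A*J := by noncomm_ring
    _ = A*((1-J*G)*G) - A*J := by rw [h2G]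
    _ = (A*(1-J*G))*G - A*J := by noncomm_ring
    _ = G - A*J := by rw [hA1, one_mul]
  have hja : J*A = J - A*J := by
    have h3 : (J+G)*A = J := by
      calc (J+G)*A = (J*(1-J*G))*A := by rw [h2J]
      _ = J*((1-J*G)*A) := by noncomm_ring
      _ = J := by rw [hA2, mul_one]
    calc J*A = (J+G)*A - G*A := by noncomm_ring
    _ = J - A*J := by rw [h3, hga]
  have hajg : A*(J*G) = A - 1 := by
    calc A*(J*G) = A - A*(1-J*G) := by noncomm_ring
    _ = A - 1 := by rw [hA1]
  have hjga : J*(G*A) = A - 1 := by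
    calc J*(G*A) = (1-(1-J*G))*A := by noncomm_ring
    _ = A - 1 := by rw [sub_mul, hA2, one_mul]
  have hjga' : (J*G)*A = A - 1 := by rw [mul_assoc]; exact hjga
  have Rgg : ∀ X : R, G*(G*X) = -X := fun X => by rw [← mul_assoc, hGG, neg_one_mul]
  have Rjj : ∀ X : R, J*(J*X) = -X := fun X => by rw [← mul_assoc, hJJ, neg_one_mul]
  have RΦΨ : ∀ X : R, Φ*(Ψ*X) = X := fun X => by rw [← mul_assoc, hΦΨ, one_mul]
  have RΨΦ : ∀ X : R, Ψ*(Φ*X) = X := fun X => by rw [← mul_assoc, hΨΦ, one_mul]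
  have RJΦ : ∀ X : R, J*(Φ*X) = Φ*(G*X) := fun X => by rw [← mul_assoc, hJΦ, mul_assoc]
  have hGΨ : G*Ψ = Ψ*J := hΨJ.symm
  have RGΨ : ∀ X : R, G*(Ψ*X) = Ψ*(J*X) := fun X => by rw [← mul_assoc, hGΨ, mul_assoc]
  have RGA : ∀ X : R, G*(A*X) = A*(J*X) := fun X => by rw [← mul_assoc, hga, mul_assoc]
  have RAG : ∀ X : R, A*(G*X) = G*X - A*(J*X) := fun X => by
    rw [← mul_assoc, hag, sub_mul, mul_assoc]
  have RJA : ∀ X : R, J*(A*X) = J*X - A*(J*X) := fun X => by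
    rw [← mul_assoc, hja, sub_mul, mul_assoc]
  have RJGA : ∀ X : R, J*(G*(A*X)) = A*X - X := fun X => by
    rw [← mul_assoc, ← mul_assoc, mul_assoc J G A, hjga, sub_mul, one_mul]
  have RAJG : ∀ X : R, A*(J*(G*X)) = A*X - X := fun X => by
    rw [← mul_assoc, ← mul_assoc, mul_assoc A J G, hajg, sub_mul, one_mul]
  refine ⟨?_, ?_, ?_, ?_, ?_, ?_⟩ <;>
  · simp only [mul_add, add_mul, mul_sub, sub_mul, mul_one, one_mul, mul_neg, neg_mul,
      neg_neg, mul_assoc, Rgg, Rjj, RΦΨ, RΨΦ, RJΦ, RGΨ, RGA, RAG, RJA, RJGA, RAJG,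
      hGG, hJJ, hΦΨ, hΨΦ, hJΦ, hGΨ, hga, hag, hja, hajg, hjga, hjga']
    noncomm_ring

set_option maxHeartbeats 4000000 in
/-- S is symmetric with positive definite real part, and
⟨Π_0^1(φZ-Z),φZ-Z⟩ + iΩ(φZ,Z) = ⟨SZ,Z⟩ for all Z ∈ ℝ^{2n}. -/
theorem stmt11 (n : ℕ) (φ : Matrix (Fin (2*n)) (Fin (2*n)) ℝ)
    (hsymp : ∀ u v, Omega n (φ *ᵥ u) (φ *ᵥ v) = Omega n u v)
    (hJ1 : Compatible n (φ * J0 n * φ⁻¹))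
    (hinv : IsUnit (1 - φ)) :
    (Smat n φ)ᵀ = Smat n φ ∧
    (∀ v : Fin (2*n) → ℝ, v ≠ 0 → 0 < (((Smat n φ).map Complex.re) *ᵥ v) ⬝ᵥ v) ∧
    ∀ Z : Fin (2*n) → ℝ,
      (Pi0T n (φ * J0 n * φ⁻¹) *ᵥ (vc (φ *ᵥ Z) - vc Z)) ⬝ᵥ (vc (φ *ᵥ Z) - vc Z)
          + Complex.I * Complex.ofReal (Omega n (φ *ᵥ Z) Z)
        = (Smat n φ *ᵥ vc Z) ⬝ᵥ vc Z := by
  classical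
  obtain ⟨hJJ, hJsymp, hJpos⟩ := hJ1
  set G : Matrix (Fin (2*n)) (Fin (2*n)) ℝ := J0 n with hGdef
  set J : Matrix (Fin (2*n)) (Fin (2*n)) ℝ := φ * G * φ⁻¹ with hJdef
  have hGG : G * G = -1 := J0_mul_J0 n
  have hGT : Gᵀ = -G := J0_transpose n
  have hOm : ∀ u v : Fin (2*n) → ℝ, Omega n u v = (G *ᵥ u) ⬝ᵥ v := fun u v => rfl
  -- symplecticity as matrix identities
  have symp_mat : ∀ (M : Matrix (Fin (2*n)) (Fin (2*n)) ℝ),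
      (∀ u v, Omega n (M *ᵥ u) (M *ᵥ v) = Omega n u v) → Mᵀ * G * M = G := by
    intro M hM
    have hmat : (G*M)ᵀ*M = Gᵀ := by
      apply dot_ext
      intro x y
      have h := hM x y
      rw [hOm, hOm] at h
      calc x ⬝ᵥ (((G*M)ᵀ*M) *ᵥ y) = x ⬝ᵥ ((G*M)ᵀ *ᵥ (M *ᵥ y)) := by
            rw [Matrix.mulVec_mulVec]
      _ = ((G*M) *ᵥ x) ⬝ᵥ (M *ᵥ y) := (mulVec_dot _ _ _).symm
      _ = (G *ᵥ (M *ᵥ x)) ⬝ᵥ (M *ᵥ y) := by rw [Matrix.mulVec_mulVec]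
      _ = (G *ᵥ x) ⬝ᵥ y := h
      _ = x ⬝ᵥ (Gᵀ *ᵥ y) := mulVec_dot _ _ _
    rw [Matrix.transpose_mul, hGT] at hmat
    calc Mᵀ*G*M = -(Mᵀ*(-G)*M) := by noncomm_ring
    _ = -(-G) := by rw [hmat]
    _ = G := neg_neg G
  have hsympM : φᵀ * G * φ = G := symp_mat φ hsymp
  have hJsympM : Jᵀ * G * J = G := symp_mat J hJsymp
  have hJT : Jᵀ = G*J*G := by
    have h1 : Jᵀ*G = -(G*J) := by
      calc Jᵀ*G = -(Jᵀ*G*(J*J)) := by rw [hJJ]; noncomm_ring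
      _ = -((Jᵀ*G*J)*J) := by noncomm_ring
      _ = -(G*J) := by rw [hJsympM]
    calc Jᵀ = -(Jᵀ*(G*G)) := by rw [hGG]; noncomm_ring
    _ = -((Jᵀ*G)*G) := by noncomm_ring
    _ = -(-(G*J)*G) := by rw [h1]
    _ = G*J*G := by noncomm_ring
  -- determinants
  have hdm1 : (-1 : Matrix (Fin (2*n)) (Fin (2*n)) ℝ).det = 1 := by
    have h : (-1 : Matrix (Fin (2*n)) (Fin (2*n)) ℝ) = (-1 : ℝ) • 1 :=
      (neg_one_smul ℝ (1 : Matrix (Fin (2*n)) (Fin (2*n)) ℝ)).symm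
    rw [h, Matrix.det_smul, Matrix.det_one, Fintype.card_fin, pow_mul]
    norm_num
  have hdetG : IsUnit G.det := by
    have h : G.det * G.det = 1 := by
      have h1 := congrArg Matrix.det hGG
      rw [Matrix.det_mul, hdm1] at h1
      exact h1
    exact IsUnit.of_mul_eq_one _ h
  have hdetφ : IsUnit φ.det := by
    have h1 := congrArg Matrix.det hsympM
    rw [Matrix.det_mul, Matrix.det_mul, Matrix.det_transpose] at h1
    have h3 : φ.det * φ.det = 1 := by
      have hG0 : G.det ≠ 0 := hdetG.ne_zero
      have h2 : (φ.det * φ.det) * G.det = 1 * G.det := by rw [one_mul]; linear_combination h1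
      exact mul_right_cancel₀ hG0 h2
    exact IsUnit.of_mul_eq_one _ h3
  have hφψ : φ * φ⁻¹ = 1 := Matrix.mul_nonsing_inv _ hdetφ
  have hψφ : φ⁻¹ * φ = 1 := Matrix.nonsing_inv_mul _ hdetφ
  set ψ : Matrix (Fin (2*n)) (Fin (2*n)) ℝ := φ⁻¹ with hψdef
  have hJφ : J * φ = φ * G := by
    rw [hJdef]
    calc (φ*G*ψ)*φ = φ*G*(ψ*φ) := by noncomm_ring
    _ = φ*G := by rw [hψφ, mul_one]
  have hψJ : ψ * J = G * ψ := by
    rw [hJdef]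
    calc ψ*(φ*G*ψ) = (ψ*φ)*(G*ψ) := by noncomm_ring
    _ = G*ψ := by rw [hψφ, one_mul]
  have hφT : φᵀ = -(G*ψ*G) := by
    have h1 : φᵀ*G = G*ψ := by
      calc φᵀ*G = (φᵀ*G*φ)*ψ - φᵀ*G*(φ*ψ - 1) := by noncomm_ring
      _ = G*ψ - φᵀ*G*(φ*ψ - 1) := by rw [hsympM]
      _ = G*ψ := by rw [hφψ]; simp
    calc φᵀ = -(φᵀ*(G*G)) := by rw [hGG]; noncomm_ring
    _ = -((φᵀ*G)*G) := by noncomm_ring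
    _ = -(G*ψ*G) := by rw [h1]
  have hψT : ψᵀ = -(G*φ*G) := by
    rw [hψdef, Matrix.transpose_nonsing_inv]
    apply Matrix.inv_eq_right_inv
    rw [hφT]
    calc -(G*ψ*G) * -(G*φ*G) = G*ψ*(G*G)*(φ*G) := by noncomm_ring
    _ = -(G*(ψ*φ)*G) := by rw [hGG]; noncomm_ring
    _ = -(G*G) := by rw [hψφ, mul_one]
    _ = 1 := by rw [hGG]; exact neg_neg 1
  -- positivity of the half-form matrices
  have hGne : ∀ u : Fin (2*n) → ℝ, u ≠ 0 → G *ᵥ u ≠ 0 := by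
    intro u hu hGu
    apply hu
    have h : G *ᵥ (G *ᵥ u) = -u := by
      rw [Matrix.mulVec_mulVec, hGG, Matrix.neg_mulVec, Matrix.one_mulVec]
    rw [hGu, Matrix.mulVec_zero] at h
    have := h.symm
    rwa [neg_eq_zero] at this
  have hαpos : ∀ u, u ≠ 0 → 0 < ((1 - J*G) *ᵥ u) ⬝ᵥ u := by
    intro u hu
    have h1 : ((1 - J*G) *ᵥ u) ⬝ᵥ u = u ⬝ᵥ u + Omega n (G *ᵥ u) (J *ᵥ (G *ᵥ u)) := by
      rw [hOm, Matrix.sub_mulVec, Matrix.one_mulVec, sub_dotProduct,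
        Matrix.mulVec_mulVec, Matrix.mulVec_mulVec, hGG, Matrix.neg_mulVec,
        Matrix.one_mulVec, neg_dotProduct]
      rw [dotProduct_comm ((J*G) *ᵥ u) u]
      ring
    rw [h1]
    have h2 := hJpos (G *ᵥ u) (hGne u hu)
    have h3 := dot_self_pos hu
    linarith
  have hβpos : ∀ u, u ≠ 0 → 0 < ((1 - G*J) *ᵥ u) ⬝ᵥ u := by
    intro u hu
    have h1 : ((1 - G*J) *ᵥ u) ⬝ᵥ u = u ⬝ᵥ u + Omega n u (J *ᵥ u) := by
      rw [hOm, Matrix.sub_mulVec, Matrix.one_mulVec, sub_dotProduct,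
        mulVec_dot G u (J *ᵥ u), hGT, Matrix.neg_mulVec, Matrix.mulVec_mulVec,
        dotProduct_neg]
      rw [dotProduct_comm ((G*J) *ᵥ u) u]
      ring
    rw [h1]
    have h2 := hJpos u hu
    have h3 := dot_self_pos hu
    linarith
  have hαh : ((1/2:ℝ) • (1 + (-J)*G)) = (1/2:ℝ) • (1 - J*G) := by
    rw [neg_mul, ← sub_eq_add_neg]
  have hβh : ((1/2:ℝ) • (1 + (-G)*J)) = (1/2:ℝ) • (1 - G*J) := by
    rw [neg_mul, ← sub_eq_add_neg]
  have hαdet : IsUnit ((1/2:ℝ) • (1 + (-J)*G)).det := by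
    apply isUnit_det_of_posq
    intro v hv
    rw [hαh, Matrix.smul_mulVec, smul_dotProduct]
    have := hαpos v hv
    simp only [smul_eq_mul]
    linarith
  have hβdet : IsUnit ((1/2:ℝ) • (1 + (-G)*J)).det := by
    apply isUnit_det_of_posq
    intro v hv
    rw [hβh, Matrix.smul_mulVec, smul_dotProduct]
    have := hβpos v hv
    simp only [smul_eq_mul]
    linarith
  set AA : Matrix (Fin (2*n)) (Fin (2*n)) ℝ := (1/2:ℝ) • Amat n J G with hAAdef
  set BB : Matrix (Fin (2*n)) (Fin (2*n)) ℝ := (1/2:ℝ) • Amat n G J with hBBdef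
  have hA1' : AA * (1 - J*G) = 1 := by
    rw [hAAdef, Amat]
    calc ((1/2:ℝ) • ((1/2:ℝ) • (1 + (-J)*G))⁻¹) * (1-J*G)
        = ((1/2:ℝ) • (1 + (-J)*G))⁻¹ * ((1/2:ℝ) • (1-J*G)) := by
          rw [smul_mul_assoc, mul_smul_comm]
      _ = ((1/2:ℝ) • (1 + (-J)*G))⁻¹ * ((1/2:ℝ) • (1 + (-J)*G)) := by rw [hαh]
      _ = 1 := Matrix.nonsing_inv_mul _ hαdet
  have hA2' : (1 - J*G) * AA = 1 := by
    rw [hAAdef, Amat]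
    calc (1-J*G) * ((1/2:ℝ) • ((1/2:ℝ) • (1 + (-J)*G))⁻¹)
        = ((1/2:ℝ) • (1-J*G)) * ((1/2:ℝ) • (1 + (-J)*G))⁻¹ := by
          rw [smul_mul_assoc, mul_smul_comm]
      _ = ((1/2:ℝ) • (1 + (-J)*G)) * ((1/2:ℝ) • (1 + (-J)*G))⁻¹ := by rw [hαh]
      _ = 1 := Matrix.mul_nonsing_inv _ hαdet
  have hB1' : BB * (1 - G*J) = 1 := by
    rw [hBBdef, Amat]
    calc ((1/2:ℝ) • ((1/2:ℝ) • (1 + (-G)*J))⁻¹) * (1-G*J)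
        = ((1/2:ℝ) • (1 + (-G)*J))⁻¹ * ((1/2:ℝ) • (1-G*J)) := by
          rw [smul_mul_assoc, mul_smul_comm]
      _ = ((1/2:ℝ) • (1 + (-G)*J))⁻¹ * ((1/2:ℝ) • (1 + (-G)*J)) := by rw [hβh]
      _ = 1 := Matrix.nonsing_inv_mul _ hβdet
  obtain ⟨c0a, c0b, c3, c1, c2, c4⟩ :=
    ring_claims G J φ ψ AA hGG hJJ hJφ hψJ hφψ hψφ hA1' hA2'
  have hBA : BB = 1 - AA := by
    calc BB = BB * ((1-G*J)*(1-AA)) := by rw [c0a, mul_one]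
    _ = (BB*(1-G*J))*(1-AA) := by noncomm_ring
    _ = 1-AA := by rw [hB1', one_mul]
  -- transposes of AA
  have hαT : ((1/2:ℝ) • (1 + (-J)*G))ᵀ = ((1/2:ℝ) • (1 + (-J)*G)) := by
    have h : ((-J)*G)ᵀ = (-J)*G := by
      rw [Matrix.transpose_mul, Matrix.transpose_neg, hJT, hGT]
      calc (-G)*(-(G*J*G)) = (G*G)*(J*G) := by noncomm_ring
      _ = (-1 : Matrix (Fin (2*n)) (Fin (2*n)) ℝ)*(J*G) := by rw [hGG]
      _ = (-J)*G := by noncomm_ring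
    rw [Matrix.transpose_smul, Matrix.transpose_add, Matrix.transpose_one, h]
  have hAAT : AAᵀ = AA := by
    rw [hAAdef, Matrix.transpose_smul]
    congr 1
    show (Amat n J G)ᵀ = Amat n J G
    rw [Amat, Matrix.transpose_nonsing_inv, hαT]
  have hα1T : (1 - J*G)ᵀ = 1 - J*G := by
    rw [Matrix.transpose_sub, Matrix.transpose_one, Matrix.transpose_mul, hJT, hGT]
    congr 1
    calc (-G)*(G*J*G) = -((G*G)*(J*G)) := by noncomm_ring
    _ = J*G := by rw [hGG]; noncomm_ring
  -- S decomposition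
  set S0 : Matrix (Fin (2*n)) (Fin (2*n)) ℝ := (AA - ψ*BB)*(1-φ) with hS0def
  set S1 : Matrix (Fin (2*n)) (Fin (2*n)) ℝ := -((AA*J + ψ*(BB*G))*(1-φ)) with hS1def
  have hPi0T : Pi0T n J = mc AA - Complex.I • mc (AA*J) := by
    simp only [Pi0T, P10]
    rw [← hGdef]
    have hAm : mc (Amat n J G) = (2:ℂ) • mc AA := by
      rw [hAAdef, mc_smul, smul_smul]
      norm_num
    rw [hAm]
    calc ((2:ℂ) • mc AA) * ((1/2:ℂ) • (1 - Complex.I • mc J))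
        = ((2:ℂ)*(1/2:ℂ)) • (mc AA * (1 - Complex.I • mc J)) := by
          rw [smul_mul_assoc, mul_smul_comm, smul_smul]
      _ = mc AA * 1 - mc AA * (Complex.I • mc J) := by
          norm_num [mul_sub]
      _ = mc AA - Complex.I • (mc AA * mc J) := by rw [mul_one, mul_smul_comm]
      _ = mc AA - Complex.I • mc (AA*J) := by rw [← mc_mul]
  have hPiT0 : PiT0 n J = mc BB - Complex.I • mc (BB*G) := by
    simp only [PiT0, P10]
    rw [← hGdef]
    have hBm : mc (Amat n G J) = (2:ℂ) • mc BB := by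
      rw [hBBdef, mc_smul, smul_smul]
      norm_num
    rw [hBm]
    calc ((2:ℂ) • mc BB) * ((1/2:ℂ) • (1 - Complex.I • mc G))
        = ((2:ℂ)*(1/2:ℂ)) • (mc BB * (1 - Complex.I • mc G)) := by
          rw [smul_mul_assoc, mul_smul_comm, smul_smul]
      _ = mc BB * 1 - mc BB * (Complex.I • mc G) := by
          norm_num [mul_sub]
      _ = mc BB - Complex.I • (mc BB * mc G) := by rw [mul_one, mul_smul_comm]
      _ = mc BB - Complex.I • mc (BB*G) := by rw [← mc_mul]
  have hPiT0conj : (PiT0 n J).map (starRingEnd ℂ) = mc BB + Complex.I • mc (BB*G) := by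
    rw [hPiT0]
    ext i j
    simp only [Matrix.map_apply, Matrix.sub_apply, Matrix.add_apply, Matrix.smul_apply,
      mc, smul_eq_mul, _root_.map_sub, _root_.map_mul, Complex.conj_ofReal, Complex.conj_I]
    ring
  clear_value G J ψ AA BB S0 S1
  have hSmat : Smat n φ = mc S0 + Complex.I • mc S1 := by
    rw [Smat, ← hGdef, ← hψdef, ← hJdef, hPi0T, hPiT0conj, hS0def, hS1def]
    simp only [mc_mul, mc_sub, mc_add, mc_neg, mc_one]
    simp only [smul_sub, smul_add, smul_neg, mul_smul_comm, smul_mul_assoc,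
      sub_mul, mul_sub, add_mul, mul_add, mul_one, one_mul, mul_neg, neg_mul,
      mul_assoc, neg_neg]
    abel
  -- symmetry of S0, S1
  have hS0T : S0ᵀ = S0 := by
    rw [hS0def, hBA]
    calc ((AA - ψ*(1-AA))*(1-φ))ᵀ
        = (1-φᵀ)*(AAᵀ - (1-AAᵀ)*ψᵀ) := by
          simp only [Matrix.transpose_mul, Matrix.transpose_sub, Matrix.transpose_one]
      _ = (1 + G*ψ*G) * (AA + (1-AA)*(G*φ*G)) := by
          rw [hAAT, hψT, hφT]; noncomm_ring
      _ = (AA - ψ*(1-AA))*(1-φ) := c1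
  have hS1T : S1ᵀ = S1 := by
    rw [hS1def, hBA]
    calc (-((AA*J + ψ*((1-AA)*G))*(1-φ)))ᵀ
        = -((1-φᵀ)*(Jᵀ*AAᵀ + (Gᵀ*(1-AAᵀ))*ψᵀ)) := by
          simp only [Matrix.transpose_neg, Matrix.transpose_mul, Matrix.transpose_add,
            Matrix.transpose_sub, Matrix.transpose_one]
      _ = -((1 + G*ψ*G) * (G*J*G*AA + G*((1-AA)*(G*φ*G)))) := by
          rw [hAAT, hψT, hφT, hJT, hGT]; noncomm_ring
      _ = -((AA*J + ψ*((1-AA)*G))*(1-φ)) := by rw [c2]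
  -- claim 3: M0 = S0
  have hM0S0 : (φ-1)ᵀ * AA * (φ-1) = S0 := by
    rw [hS0def, hBA]
    calc (φ-1)ᵀ * AA * (φ-1) = -((1 + G*ψ*G)*AA)*(φ-1) := by
          rw [Matrix.transpose_sub, Matrix.transpose_one, hφT]; noncomm_ring
    _ = -(AA - ψ*(1-AA))*(φ-1) := by rw [c3]
    _ = (AA - ψ*(1-AA))*(1-φ) := by noncomm_ring
  refine ⟨?_, ?_, ?_⟩
  · rw [hSmat, Matrix.transpose_add, Matrix.transpose_smul, mc_transpose, mc_transpose,
      hS0T, hS1T]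
  · intro v hv
    have hRe : (Smat n φ).map Complex.re = S0 := by
      rw [hSmat]
      ext i j
      simp [mc, Matrix.map_apply, Matrix.add_apply, Matrix.smul_apply, smul_eq_mul]
    rw [hRe, ← hM0S0]
    set w : Fin (2*n) → ℝ := (φ-1) *ᵥ v with hwdef
    have hw0 : w ≠ 0 := by
      intro h0
      apply hv
      obtain ⟨u, hu⟩ := hinv
      have hxy : (1-φ) *ᵥ v = 0 := by
        have h : (1-φ) *ᵥ v = -w := by
          rw [hwdef, ← Matrix.neg_mulVec, show -(φ-1) = 1-φ from by noncomm_ring]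
        rw [h, h0, neg_zero]
      have h1 : (↑u⁻¹ : Matrix (Fin (2*n)) (Fin (2*n)) ℝ) * (1-φ) = 1 := by
        rw [← hu]; exact u.inv_mul
      calc v = 1 *ᵥ v := (Matrix.one_mulVec v).symm
      _ = ((↑u⁻¹ : Matrix (Fin (2*n)) (Fin (2*n)) ℝ) * (1-φ)) *ᵥ v := by rw [h1]
      _ = (↑u⁻¹ : Matrix (Fin (2*n)) (Fin (2*n)) ℝ) *ᵥ ((1-φ) *ᵥ v) :=
          (Matrix.mulVec_mulVec _ _ _).symm
      _ = 0 := by rw [hxy, Matrix.mulVec_zero]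
    have hq : (((φ-1)ᵀ*AA*(φ-1)) *ᵥ v) ⬝ᵥ v = (AA *ᵥ w) ⬝ᵥ w := by
      rw [← Matrix.mulVec_mulVec, ← Matrix.mulVec_mulVec, mulVec_dot,
        Matrix.transpose_transpose, hwdef]
    rw [hq]
    have hux : (1-J*G) *ᵥ (AA *ᵥ w) = w := by
      rw [Matrix.mulVec_mulVec, hA2', Matrix.one_mulVec]
    have hu0 : AA *ᵥ w ≠ 0 := fun h0 => hw0 (by rw [← hux, h0, Matrix.mulVec_zero])
    have h2 : (AA *ᵥ w) ⬝ᵥ w = ((1-J*G) *ᵥ (AA *ᵥ w)) ⬝ᵥ (AA *ᵥ w) := by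
      have e := mulVec_dot (1-J*G) (AA *ᵥ w) (AA *ᵥ w)
      rw [hα1T] at e
      rw [e]
      exact congrArg (fun t => (AA *ᵥ w) ⬝ᵥ t) hux.symm
    rw [h2]
    exact hαpos _ hu0
  · intro Z
    have hvw : vc (φ *ᵥ Z) - vc Z = mc (φ - 1) *ᵥ vc Z := by
      rw [mc_mulVec, Matrix.sub_mulVec, Matrix.one_mulVec, vc_sub]
    rw [hvw]
    have e1 : (Pi0T n J *ᵥ (mc (φ-1) *ᵥ vc Z)) ⬝ᵥ (mc (φ-1) *ᵥ vc Z)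
        = ((mc ((φ-1)ᵀ) * (Pi0T n J * mc (φ-1))) *ᵥ vc Z) ⬝ᵥ vc Z := by
      rw [Matrix.mulVec_mulVec, dotProduct_comm, mulVec_dot,
        Matrix.mulVec_mulVec, dotProduct_comm, mc_transpose]
    have e2 : Complex.I * Complex.ofReal (Omega n (φ *ᵥ Z) Z)
        = ((Complex.I • mc (G*φ)) *ᵥ vc Z) ⬝ᵥ vc Z := by
      rw [hOm, Matrix.mulVec_mulVec, ← vc_dot, ← mc_mulVec,
        Matrix.smul_mulVec, smul_dotProduct, smul_eq_mul]
    rw [e1, e2, ← add_dotProduct, ← Matrix.add_mulVec]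
    set M0 : Matrix (Fin (2*n)) (Fin (2*n)) ℝ := (φ-1)ᵀ*AA*(φ-1) with hM0def
    set M1 : Matrix (Fin (2*n)) (Fin (2*n)) ℝ := G*φ - (φ-1)ᵀ*(AA*J)*(φ-1) with hM1def
    clear_value M0 M1
    have hMc : mc ((φ-1)ᵀ) * (Pi0T n J * mc (φ-1)) + Complex.I • mc (G*φ)
        = mc M0 + Complex.I • mc M1 := by
      rw [hPi0T, hM0def, hM1def]
      simp only [mc_mul, mc_sub, mc_add, mc_one]
      simp only [smul_sub, smul_add, smul_neg, mul_smul_comm, smul_mul_assoc,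
        sub_mul, mul_sub, add_mul, mul_add, mul_one, one_mul, mul_neg, neg_mul,
        mul_assoc, neg_neg]
      abel
    rw [hMc]
    have hM0T : M0ᵀ = M0 := by
      rw [hM0def]
      calc ((φ-1)ᵀ*AA*(φ-1))ᵀ = (φ-1)ᵀ*AAᵀ*((φ-1)ᵀ)ᵀ := by
            simp only [Matrix.transpose_mul, Matrix.transpose_transpose]; noncomm_ring
      _ = (φ-1)ᵀ*AA*(φ-1) := by rw [hAAT, Matrix.transpose_transpose]
    have hM1sum : M1 + M1ᵀ = S1 + S1 := by
      have hM1T : M1ᵀ = φᵀ*Gᵀ - (φ-1)ᵀ*(Jᵀ*AAᵀ)*(φ-1) := by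
        rw [hM1def]
        simp only [Matrix.transpose_sub, Matrix.transpose_mul, Matrix.transpose_transpose]
        noncomm_ring
      rw [hM1T, hAAT, hJT, hGT, hM1def, hS1def, hBA]
      rw [Matrix.transpose_sub, Matrix.transpose_one, hφT]
      calc (G*φ - (-(G*ψ*G) - 1)*(AA*J)*(φ-1)) +
            ((-(G*ψ*G))*(-G) - (-(G*ψ*G) - 1)*(G*J*G*AA)*(φ-1))
          = (G*φ + (1+G*ψ*G)*((AA*J)*(φ-1))) +
            (G*ψ*(G*G) + (1+G*ψ*G)*((G*J*G*AA)*(φ-1))) := by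
            noncomm_ring
      _ = (G*φ + (1+G*ψ*G)*((AA*J)*(φ-1))) +
            (-(G*ψ) + (1+G*ψ*G)*((G*J*G*AA)*(φ-1))) := by
            rw [hGG]; noncomm_ring
      _ = -((AA*J + ψ*((1-AA)*G))*(1-φ)) - ((AA*J + ψ*((1-AA)*G))*(1-φ)) := c4
      _ = -((AA*J + ψ*((1-AA)*G))*(1-φ)) + -((AA*J + ψ*((1-AA)*G))*(1-φ)) := by
            noncomm_ring
    have hMq : (mc M0 + Complex.I • mc M1) + (mc M0 + Complex.I • mc M1)ᵀ
        = Smat n φ + Smat n φ := by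
      rw [Matrix.transpose_add, Matrix.transpose_smul, mc_transpose, mc_transpose,
        hM0T, hSmat]
      have h1 : Complex.I • mc M1 + Complex.I • mc M1ᵀ = Complex.I • mc S1 + Complex.I • mc S1 := by
        rw [← smul_add, ← mc_add, hM1sum, mc_add, smul_add]
      have h0 : M0 = S0 := hM0S0
      rw [h0]
      calc mc S0 + Complex.I • mc M1 + (mc S0 + Complex.I • mc M1ᵀ)
          = mc S0 + mc S0 + (Complex.I • mc M1 + Complex.I • mc M1ᵀ) := by abel
      _ = mc S0 + mc S0 + (Complex.I • mc S1 + Complex.I • mc S1) := by rw [h1]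
      _ = mc S0 + Complex.I • mc S1 + (mc S0 + Complex.I • mc S1) := by abel
    have h3 := congrArg (fun X : Matrix (Fin (2*n)) (Fin (2*n)) ℂ => (X *ᵥ vc Z) ⬝ᵥ vc Z) hMq
    have qadd : ∀ X Y : Matrix (Fin (2*n)) (Fin (2*n)) ℂ,
        ((X + Y) *ᵥ vc Z) ⬝ᵥ vc Z = (X *ᵥ vc Z) ⬝ᵥ vc Z + (Y *ᵥ vc Z) ⬝ᵥ vc Z := by
      intro X Y
      rw [Matrix.add_mulVec, add_dotProduct]
    rw [qadd (mc M0 + Complex.I • mc M1) ((mc M0 + Complex.I • mc M1)ᵀ),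
      qadd (Smat n φ) (Smat n φ)] at h3
    simp only [qform_transpose] at h3
    rw [← two_mul, ← two_mul] at h3
    exact mul_left_cancel₀ two_ne_zero h3

end
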